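/- Let F be a field of characteristic different from 2 and let n ≥ 2 be even. Then there is no group homomorphism σ : GL_n(F) → SL_n(F) such that σ(g) = g for all g ∈ SL_n(F); that is, the inclusion SL_n(F) → GL_n(F) admits no retraction, so the short exact sequence 1 → SL_n(F) → GL_n(F) → F^× → 1 does not split as a direct product. (Corrected form of the non-splitting claim in Example 4.1.) -/

import Mathlib

/-- Corrected form of the non-splitting claim in Example 4.1: for `F` of
characteristic `≠ 2` and `n ≥ 2` even, the inclusion `SL_n(F) → GL_n(F)`
admits no retraction. -/
theorem stmt_12 {F : Type*} [Field F] (hchar : ringChar F ≠ 2)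
    (n : ℕ) (hn : 2 ≤ n) (heven : Even n) :
    ¬ ∃ σ : GL (Fin n) F →* Matrix.SpecialLinearGroup (Fin n) F,
        ∀ g : Matrix.SpecialLinearGroup (Fin n) F,
          σ (Matrix.SpecialLinearGroup.toGL g) = g := by
  rintro ⟨σ, hσ⟩
  haveI : NeZero n := ⟨by omega⟩
  set i0 : Fin n := 0 with hi0
  set D : Matrix (Fin n) (Fin n) F :=
    Matrix.diagonal (fun i => if i = i0 then (-1 : F) else 1) with hDdef
  have hD2 : D * D = 1 := by
    rw [hDdef, Matrix.diagonal_mul_diagonal]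
    ext i j
    rcases eq_or_ne i j with rfl | hij
    · by_cases h : i = i0 <;> simp [h]
    · simp [Matrix.diagonal_apply_ne _ hij, Matrix.one_apply_ne hij]
  have hDdet : D.det = -1 := by
    rw [hDdef, Matrix.det_diagonal]
    rw [Finset.prod_ite_eq' Finset.univ i0 (fun _ => (-1 : F))]
    simp
  set dGL : GL (Fin n) F := ⟨D, D, hD2, hD2⟩ with hdGL
  set sM : Matrix (Fin n) (Fin n) F := ((σ dGL : Matrix.SpecialLinearGroup (Fin n) F) : Matrix (Fin n) (Fin n) F) with hsM
  have hsdet : sM.det = 1 := (σ dGL).2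
  -- key commutation: sM * x = D * x * D * sM for any x in SL
  have key : ∀ x : Matrix.SpecialLinearGroup (Fin n) F,
      sM * (x : Matrix (Fin n) (Fin n) F) = D * x * D * sM := by
    intro x
    have hdety : (D * (x : Matrix (Fin n) (Fin n) F) * D).det = 1 := by
      rw [Matrix.det_mul, Matrix.det_mul, hDdet, x.2]; ring
    set y : Matrix.SpecialLinearGroup (Fin n) F := ⟨D * x * D, hdety⟩ with hy
    have hunit : dGL * Matrix.SpecialLinearGroup.toGL x
        = Matrix.SpecialLinearGroup.toGL y * dGL := by
      apply Units.ext
      show D * (x : Matrix (Fin n) (Fin n) F) = (D * x * D) * D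
      rw [mul_assoc, mul_assoc, hD2, mul_one]
    have := congrArg σ hunit
    rw [map_mul, map_mul, hσ x, hσ y] at this
    have := congrArg (fun z : Matrix.SpecialLinearGroup (Fin n) F =>
      (z : Matrix (Fin n) (Fin n) F)) this
    exact this
  set m : Matrix (Fin n) (Fin n) F := D * sM with hm
  have hcomm : ∀ x : Matrix.SpecialLinearGroup (Fin n) F,
      m * (x : Matrix (Fin n) (Fin n) F) = (x : Matrix (Fin n) (Fin n) F) * m := by
    intro x
    rw [hm, mul_assoc, key x]
    calc D * (D * x * D * sM) = (D * D) * x * (D * sM) := by noncomm_ring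
      _ = x * (D * sM) := by rw [hD2, one_mul]
  have hE : ∀ i j : Fin n, i ≠ j →
      m * Matrix.single i j (1 : F) = Matrix.single i j (1 : F) * m := by
    intro i j hij
    have hdt : (Matrix.transvection i j (1 : F)).det = 1 :=
      Matrix.det_transvection_of_ne i j hij 1
    have := hcomm ⟨Matrix.transvection i j (1 : F), hdt⟩
    simp only [Matrix.transvection] at this
    rw [mul_add, add_mul, mul_one, one_mul] at this
    exact add_left_cancel this
  -- m is scalar
  set lam : F := m i0 i0 with hlam
  have hscalar : m = lam • (1 : Matrix (Fin n) (Fin n) F) := by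
    ext a b
    rcases eq_or_ne a b with rfl | hab
    · rcases eq_or_ne a i0 with rfl | ha
      · simp [hlam]
      · have := congrFun (congrFun (hE i0 a (Ne.symm ha)) i0) a
        simp only [Matrix.mul_single_apply_same,
          Matrix.single_mul_apply_same, mul_one, one_mul] at this
        simp [← this, hlam]
    · -- m a b = 0 for a ≠ b : use E_{b j} with j ≠ b
      obtain ⟨j, hj⟩ := Fintype.exists_ne_of_one_lt_card (by simpa using (show 1 < n by omega)) b
      have := congrFun (congrFun (hE b j (Ne.symm hj)) a) j
      rw [Matrix.mul_single_apply_same,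
        Matrix.single_mul_apply_of_ne _ _ _ _ _ hab] at this
      simp only [mul_one] at this
      simp [this, hab]
  -- sM = lam • D
  have hsMeq : sM = lam • D := by
    have : D * m = sM := by rw [hm, ← mul_assoc, hD2, one_mul]
    rw [← this, hscalar, Matrix.mul_smul, mul_one]
  -- lam^2 = 1
  have hd2 : dGL * dGL = 1 := Units.ext hD2
  have hs2 : sM * sM = 1 := by
    have h1 : σ dGL * σ dGL = 1 := by rw [← map_mul, hd2, map_one]
    have := congrArg (fun z : Matrix.SpecialLinearGroup (Fin n) F =>
      (z : Matrix (Fin n) (Fin n) F)) h1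
    simpa [hsM] using this
  have hlam2 : lam ^ 2 = 1 := by
    rw [hsMeq] at hs2
    rw [Matrix.smul_mul, Matrix.mul_smul, hD2, smul_smul] at hs2
    have := congrFun (congrFun hs2 i0) i0
    simpa [sq] using this
  -- lam^n = -1
  have hlamn : lam ^ n = -1 := by
    have h1 : m.det = -1 := by rw [hm, Matrix.det_mul, hDdet, hsdet]; ring
    rw [hscalar] at h1
    rw [Matrix.det_smul, Matrix.det_one, mul_one] at h1
    simpa using h1
  obtain ⟨t, ht⟩ := heven
  rw [ht, ← two_mul, pow_mul, hlam2, one_pow] at hlamn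
  exact Ring.two_ne_zero hchar (by linear_combination hlamn)
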